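/- With the hypotheses of the BMW module setup (G_i invertible, braid relations G_i G_{i+1} G_i = G_{i+1} G_i G_{i+1}, far commutation, and G_s v = κ v for s ≤ n−3), if j < i < i+1 < k then κ⁻¹ G_i T_{jk} = T_{jk}, where T_{jk} = G_j⋯G_{k-2} E_{k-1}⋯E_{n-1} v. -/

import Mathlib

/-- The ordered product `G_j G_{j+1} ⋯ G_{k-2}`. -/
def Gword {C : Type*} [Ring C] (G : ℕ → C) (j k : ℕ) : C :=
  ((List.range' j (k - 1 - j)).map G).prod

/-- The ordered product `E_{k-1} E_k ⋯ E_{n-1}`. -/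
def Eword {C : Type*} [Ring C] (E : ℕ → C) (k n : ℕ) : C :=
  ((List.range' (k - 1) (n - k + 1)).map E).prod

private lemma comm_prod {C : Type*} [Ring C] (x : C) (f : ℕ → C) (s m : ℕ)
    (h : ∀ r, s ≤ r → r < s + m → x * f r = f r * x) :
    x * ((List.range' s m).map f).prod = ((List.range' s m).map f).prod * x := by
  refine (Commute.list_prod_right _ x ?_).eq
  intro y hy
  obtain ⟨r, hr, rfl⟩ := List.mem_map.mp hy
  rw [List.mem_range'_1] at hr
  exact h r hr.1 hr.2

/-- Case B (second subcase) of the paper: with the braid relations, far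
commutation, and `G_s v = κ v` for `s ≤ n-3`, if `j < i < i+1 < k ≤ n` then
`κ⁻¹ G_i T_{jk} = T_{jk}` where `T_{jk} = G_j ⋯ G_{k-2} E_{k-1} ⋯ E_{n-1} v`. -/
theorem stmt_10 {C V : Type*} [Ring C] [AddCommGroup V] [Module C V]
    (n : ℕ) (G E : ℕ → C) (κ κinv : C)
    (hκcentral : ∀ x : C, κ * x = x * κ)
    (hκ1 : κ * κinv = 1) (hκ2 : κinv * κ = 1)
    (v : V) (hGv : ∀ s, s + 3 ≤ n → G s • v = κ • v)
    (hGGfar : ∀ p r, p + 2 ≤ r ∨ r + 2 ≤ p → G p * G r = G r * G p)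
    (hGEfar : ∀ p r, p + 2 ≤ r ∨ r + 2 ≤ p → G p * E r = E r * G p)
    (hbraid : ∀ s, G s * G (s+1) * G s = G (s+1) * G s * G (s+1))
    (i j k : ℕ) (hj : 1 ≤ j) (hji : j < i) (hik : i + 1 < k) (hkn : k ≤ n) :
    κinv • (G i • ((Gword G j k * Eword E k n) • v)) =
      (Gword G j k * Eword E k n) • v := by
  -- split the G-word
  have hsplit : List.range' j (k - 1 - j)
      = List.range' j (i - 1 - j) ++ (List.range' (i-1) 2 ++ List.range' (i+1) (k-2-i)) := by
    have h1 : List.range' (i-1) 2 ++ List.range' (i+1) (k-2-i)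
        = List.range' (i-1) ((k-2-i) + 2) := by
      have := List.range'_append (s := i-1) (m := 2) (n := k-2-i) (step := 1)
      simpa [show i - 1 + 1 * 2 = i + 1 by omega, show 2 + (k-2-i) = (k-2-i) + 2 by omega] using this
    rw [h1]
    have := List.range'_append (s := j) (m := i-1-j) (n := (k-2-i)+2) (step := 1)
    rw [show j + 1 * (i-1-j) = i - 1 by omega] at this
    rw [this, show (i-1-j) + ((k-2-i) + 2) = k - 1 - j by omega]
  set A := ((List.range' j (i - 1 - j)).map G).prod with hA
  set Cc := ((List.range' (i+1) (k-2-i)).map G).prod with hC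
  set Ew := Eword E k n with hE
  have hrange2 : List.range' (i-1) 2 = [i-1, i] := by
    simp [List.range'_succ, show i - 1 + 1 = i by omega]
  have hG : Gword G j k = A * ((G (i-1) * G i) * Cc) := by
    rw [Gword, hsplit]
    simp [hrange2, mul_assoc]
    rfl
  -- G i commutes with A
  have hiA : G i * A = A * G i := comm_prod _ _ _ _ (fun r h1 h2 => hGGfar i r (by omega))
  -- G (i-1) commutes with Cc
  have hiC : G (i-1) * Cc = Cc * G (i-1) := comm_prod _ _ _ _ (fun r h1 h2 => hGGfar (i-1) r (by omega))
  -- G (i-1) commutes with Ew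
  have hiE : G (i-1) * Ew = Ew * G (i-1) := comm_prod _ _ _ _ (fun r h1 h2 => hGEfar (i-1) r (by omega))
  -- braid
  have hbr : G i * (G (i-1) * G i) = (G (i-1) * G i) * G (i-1) := by
    have := hbraid (i-1)
    rw [show i - 1 + 1 = i by omega] at this
    rw [← mul_assoc, this, mul_assoc]
  have key : G i * (Gword G j k * Ew) = (Gword G j k * Ew) * G (i-1) := by
    rw [hG]
    calc G i * (A * (G (i-1) * G i * Cc) * Ew)
        = A * (G i * (G (i-1) * G i)) * Cc * Ew := by
          rw [← mul_assoc, ← mul_assoc, ← mul_assoc, hiA, mul_assoc A, mul_assoc A,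
            ← mul_assoc (G i)]
      _ = A * (G (i-1) * G i) * (G (i-1) * Cc) * Ew := by
          rw [hbr]; simp [mul_assoc]
      _ = A * (G (i-1) * G i) * Cc * (G (i-1) * Ew) := by rw [hiC]; simp [mul_assoc]
      _ = A * (G (i-1) * G i * Cc) * Ew * G (i-1) := by rw [hiE]; simp [mul_assoc]
  have hGv' : G (i-1) • v = κ • v := hGv (i-1) (by omega)
  have step : G i • ((Gword G j k * Ew) • v) = (Gword G j k * Ew) • (κ • v) := by
    rw [← mul_smul, key, mul_smul, hGv']
  rw [step, ← mul_smul _ κ v, ← hκcentral, ← mul_smul, ← mul_assoc, hκ2, one_mul]
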